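/- For every integer n ≥ 2 there exists a prime power q such that q^(n−1) < binom(n + q − 1, n); consequently, there exists a finite field 𝔽_q for which the set S(n) of all n elementary symmetric polynomials is a minimal separating set for the symmetric polynomials in n variables over 𝔽_q having the least possible number of elements. -/

import Mathlib

/-- A set `S` of polynomials in `n` variables over `F` is a separating set for the
symmetric polynomials if it consists of symmetric polynomials and whenever two points
`u, v : Fin n → F` are separated by some symmetric polynomial, they are separated by
some element of `S`. -/
def IsSeparatingSet {F : Type*} [CommSemiring F] {n : ℕ}
    (S : Set (MvPolynomial (Fin n) F)) : Prop :=
  (∀ f ∈ S, f.IsSymmetric) ∧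
  ∀ u v : Fin n → F,
    (∃ f : MvPolynomial (Fin n) F, f.IsSymmetric ∧
        MvPolynomial.eval u f ≠ MvPolynomial.eval v f) →
    ∃ f ∈ S, MvPolynomial.eval u f ≠ MvPolynomial.eval v f

/-- `S(n)`, the set of the elementary symmetric polynomials `s_1, …, s_n`
in `n` variables over `F`. -/
def elemSymmSet (F : Type*) [CommSemiring F] (n : ℕ) : Set (MvPolynomial (Fin n) F) :=
  {f | ∃ t : ℕ, 1 ≤ t ∧ t ≤ n ∧ f = MvPolynomial.esymm (Fin n) F t}

open MvPolynomial Finset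

section Aux

variable {F : Type*}

lemma eval_esymm_eq [CommSemiring F] {n : ℕ} (u : Fin n → F) (t : ℕ) :
    MvPolynomial.eval u (MvPolynomial.esymm (Fin n) F t)
      = (Finset.univ.val.map u).esymm t := by
  rw [MvPolynomial.esymm, map_sum, Finset.esymm_map_val]
  simp [MvPolynomial.eval_prod]

lemma multiset_eq_of_esymm_eq [Field F] {n : ℕ} (u v : Fin n → F)
    (h : ∀ t, 1 ≤ t → t ≤ n →
      (Finset.univ.val.map u).esymm t = (Finset.univ.val.map v).esymm t) :
    Finset.univ.val.map u = Finset.univ.val.map v := by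
  have hcu : Multiset.card (Finset.univ.val.map u) = n := by simp
  have hcv : Multiset.card (Finset.univ.val.map v) = n := by simp
  have hprod : ((Finset.univ.val.map u).map (fun r => Polynomial.X - Polynomial.C r)).prod
      = ((Finset.univ.val.map v).map (fun r => Polynomial.X - Polynomial.C r)).prod := by
    rw [Multiset.prod_X_sub_X_eq_sum_esymm, Multiset.prod_X_sub_X_eq_sum_esymm, hcu, hcv]
    refine Finset.sum_congr rfl fun j hj => ?_
    rcases Nat.eq_zero_or_pos j with rfl | hjp
    · simp [Multiset.esymm]
    · rw [h j hjp (by have := Finset.mem_range.1 hj; omega)]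
  have := congrArg Polynomial.roots hprod
  rwa [Polynomial.roots_multiset_prod_X_sub_C, Polynomial.roots_multiset_prod_X_sub_C] at this

lemma exists_comp_perm {α : Type*} : ∀ {n : ℕ} (u v : Fin n → α),
    Multiset.map u Finset.univ.val = Multiset.map v Finset.univ.val →
    ∃ σ : Equiv.Perm (Fin n), u ∘ σ = v := by
  intro n
  induction n with
  | zero => exact fun u v _ => ⟨1, funext fun i => i.elim0⟩
  | succ n ih =>
    intro u v h
    have h0 : v 0 ∈ Multiset.map u Finset.univ.val := by
      rw [h]; exact Multiset.mem_map.2 ⟨0, Finset.mem_univ_val _, rfl⟩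
    obtain ⟨i, -, hi⟩ := Multiset.mem_map.1 h0
    set u' : Fin (n + 1) → α := u ∘ (Equiv.swap 0 i) with hu'
    have h1 : Multiset.map u' Finset.univ.val = Multiset.map u Finset.univ.val := by
      rw [hu', ← Multiset.map_map]
      congr 1
      have := congrArg Finset.val (Finset.map_univ_equiv (Equiv.swap 0 i))
      simpa [Finset.map] using this
    have h2 : Multiset.map u' Finset.univ.val = Multiset.map v Finset.univ.val := h1.trans h
    have huniv : (Finset.univ : Finset (Fin (n+1))).val
        = 0 ::ₘ (Finset.univ.val.map (Fin.succ)) := by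
      rw [Fin.univ_succ, Finset.cons_val, Finset.map_val]
      rfl
    rw [huniv, Multiset.map_cons, Multiset.map_cons, Multiset.map_map, Multiset.map_map] at h2
    have hu'0 : u' 0 = v 0 := by simp [hu', hi]
    rw [hu'0] at h2
    have h3 := (Multiset.cons_inj_right (v 0)).1 h2
    obtain ⟨σ', hσ'⟩ := ih (fun j => u' j.succ) (fun j => v j.succ) h3
    refine ⟨(Equiv.Perm.decomposeFin.symm (0, σ')).trans (Equiv.swap 0 i), funext fun x => ?_⟩
    refine Fin.cases ?_ (fun j => ?_) x
    · simp [hi]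
    · have := congrFun hσ' j
      simpa [hu'] using this

lemma eval_eq_of_multiset_eq [CommSemiring F] {n : ℕ} {u v : Fin n → F}
    (h : Multiset.map u Finset.univ.val = Multiset.map v Finset.univ.val)
    {f : MvPolynomial (Fin n) F} (hf : f.IsSymmetric) :
    MvPolynomial.eval u f = MvPolynomial.eval v f := by
  obtain ⟨σ, hσ⟩ := exists_comp_perm u v h
  conv_lhs => rw [← hf σ]
  rw [MvPolynomial.eval_rename, hσ]

end Aux

lemma exists_tuple_of_card {α : Type*} {n : ℕ} (m : Multiset α) (hm : Multiset.card m = n) :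
    ∃ u : Fin n → α, Multiset.map u Finset.univ.val = m := by
  obtain ⟨l, rfl⟩ := Quotient.exists_rep m
  have hl : l.length = n := by simpa using hm
  refine ⟨fun i => l.get (Fin.cast hl.symm i), ?_⟩
  rw [Fin.univ_val_map]
  congr 1
  apply List.ext_get (by simp [hl])
  intro i h1 h2
  simp

theorem stmt_17 (n : ℕ) (hn : 2 ≤ n) :
    ∃ q : ℕ, IsPrimePow q ∧ q ^ (n - 1) < Nat.choose (n + q - 1) n ∧
      ∀ (F : Type) [Field F] [Fintype F], Fintype.card F = q →
        IsSeparatingSet (elemSymmSet F n) ∧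
        ∀ T : Set (MvPolynomial (Fin n) F), IsSeparatingSet T → T.Finite →
          (elemSymmSet F n).ncard ≤ T.ncard := by
  classical
  set q := 2 ^ (Nat.factorial n) with hqdef
  have hq1 : 1 < q := Nat.one_lt_two_pow (Nat.factorial_ne_zero n)
  have hfq : (Nat.factorial n) < q := Nat.lt_two_pow_self
  have harith : q ^ (n - 1) < (n + q - 1).choose n := by
    have h1 : q ^ n ≤ q.ascFactorial n := Nat.pow_succ_le_ascFactorial q n
    have h2 : q.ascFactorial n = (Nat.factorial n) * (q + n - 1).choose n :=
      Nat.ascFactorial_eq_factorial_mul_choose' q n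
    have h3 : (Nat.factorial n) * q ^ (n - 1) < q ^ n := by
      have he : q ^ n = q * q ^ (n - 1) := by
        rw [← pow_succ']
        congr 1
        omega
      rw [he]
      exact Nat.mul_lt_mul_of_lt_of_le hfq (le_refl _) (Nat.pow_pos (by omega))
    have h4 : (Nat.factorial n) * q ^ (n - 1) < (Nat.factorial n) * ((q + n - 1).choose n) := by omega
    have h5 := Nat.lt_of_mul_lt_mul_left h4
    rwa [show q + n - 1 = n + q - 1 by omega] at h5
  refine ⟨q, ⟨2, (Nat.factorial n), Nat.prime_two.prime, Nat.factorial_pos n, rfl⟩, harith, ?_⟩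
  intro F _ _ hF
  constructor
  · constructor
    · rintro f ⟨t, -, -, rfl⟩
      exact MvPolynomial.esymm_isSymmetric _ _ _
    · intro u v huv
      by_contra hcon
      push_neg at hcon
      obtain ⟨f, hf, hne⟩ := huv
      apply hne
      apply eval_eq_of_multiset_eq ?_ hf
      apply multiset_eq_of_esymm_eq
      intro t h1 h2
      rw [← eval_esymm_eq, ← eval_esymm_eq]
      exact hcon _ ⟨t, h1, h2, rfl⟩
  · intro T hT hTfin
    have hEle : (elemSymmSet F n).ncard ≤ n := by
      have hsub : elemSymmSet F n ⊆ (fun t => MvPolynomial.esymm (Fin n) F t) '' (Set.Icc 1 n) := by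
        rintro f ⟨t, h1, h2, rfl⟩; exact ⟨t, ⟨h1, h2⟩, rfl⟩
      calc (elemSymmSet F n).ncard
          ≤ ((fun t => MvPolynomial.esymm (Fin n) F t) '' (Set.Icc 1 n)).ncard :=
            Set.ncard_le_ncard hsub ((Set.finite_Icc _ _).image _)
        _ ≤ (Set.Icc 1 n).ncard := Set.ncard_image_le (Set.finite_Icc _ _)
        _ = n := by rw [← Finset.coe_Icc, Set.ncard_coe_finset, Nat.card_Icc]; omega
    have key : ∀ s : Sym F n, ∃ u : Fin n → F, Multiset.map u Finset.univ.val = s.1 :=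
      fun s => exists_tuple_of_card s.1 s.2
    choose rep hrep using key
    set Tf := hTfin.toFinset with hTf
    have hinj : Function.Injective
        (fun s : Sym F n => fun f : Tf => MvPolynomial.eval (rep s) f.1) := by
      intro s₁ s₂ h12
      have hall : ∀ f : MvPolynomial (Fin n) F, f.IsSymmetric →
          MvPolynomial.eval (rep s₁) f = MvPolynomial.eval (rep s₂) f := by
        by_contra hc
        push_neg at hc
        obtain ⟨f, hf, hne⟩ := hc
        obtain ⟨g, hgT, hgne⟩ := hT.2 (rep s₁) (rep s₂) ⟨f, hf, hne⟩
        exact hgne (congrFun h12 ⟨g, hTfin.mem_toFinset.2 hgT⟩)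
      have hms : Multiset.map (rep s₁) Finset.univ.val
          = Multiset.map (rep s₂) Finset.univ.val := by
        apply multiset_eq_of_esymm_eq
        intro t h1 h2
        rw [← eval_esymm_eq, ← eval_esymm_eq]
        exact hall _ (MvPolynomial.esymm_isSymmetric _ _ _)
      apply Subtype.ext
      rw [← hrep s₁, ← hrep s₂, hms]
    have hcard := Fintype.card_le_of_injective _ hinj
    rw [Sym.card_sym_eq_choose, hF] at hcard
    have hfun : Fintype.card (↥Tf → F) = q ^ T.ncard := by
      rw [Fintype.card_fun, hF, Fintype.card_coe, Set.ncard_eq_toFinset_card T hTfin]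
    rw [hfun] at hcard
    have hlt : q ^ (n - 1) < q ^ T.ncard := by
      refine lt_of_lt_of_le ?_ hcard
      rwa [show q + n - 1 = n + q - 1 by omega]
    have := (Nat.pow_lt_pow_iff_right hq1).1 hlt
    omega
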